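/- Let Σ be a real symmetric positive definite N×N matrix, μ ∈ ℝ^N, and let f be a probability density on ℝ^N with mean vector μ and covariance matrix Σ (i.e., ∫ x f(x) dx = μ and ∫ (x−μ)(x−μ)ᵀ f(x) dx = Σ), such that f·log f is integrable. Then the differential entropy satisfies −∫_{ℝ^N} f log f ≤ (1/2) log((2π e)^N |Σ|), with equality for the multivariate normal density with mean μ and covariance Σ. That is, the multivariate normal distribution is the maximum entropy distribution for a given mean vector and covariance matrix. -/

import Mathlib

open Matrix MeasureTheory Real

/-- Density of the multivariate normal distribution `N(μ, Σ)` on `ℝ^n`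
(for `Σ` positive definite). -/
noncomputable def gaussDensity {n : ℕ} (μ : Fin n → ℝ) (S : Matrix (Fin n) (Fin n) ℝ)
    (x : Fin n → ℝ) : ℝ :=
  (2 * π) ^ (-(n : ℝ) / 2) * S.det ^ (-(1 : ℝ) / 2) *
    Real.exp (-(1 / 2) * ((x - μ) ⬝ᵥ S⁻¹.mulVec (x - μ)))

/-- The multivariate normal distribution `N(μ, Σ)` on `ℝ^n`, as the measure with
density `gaussDensity μ S` with respect to Lebesgue measure. -/
noncomputable def gaussMeasure {n : ℕ} (μ : Fin n → ℝ) (S : Matrix (Fin n) (Fin n) ℝ) :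
    Measure (Fin n → ℝ) :=
  volume.withDensity fun x => ENNReal.ofReal (gaussDensity μ S x)


section AuxMaxEnt
open Filter

lemma gauss1_int : Integrable fun x : ℝ => exp (-(1/2) * x ^ 2) :=
  integrable_exp_neg_mul_sq (by norm_num)

lemma gauss1 : ∫ x : ℝ, exp (-(1/2) * x ^ 2) = Real.sqrt (2 * π) := by
  have := integral_gaussian (1/2)
  rw [show π / (1/2 : ℝ) = 2 * π by ring] at this
  simpa using this

lemma gauss2_int : Integrable fun x : ℝ => x ^ 2 * exp (-(1/2) * x ^ 2) := by
  have h := integrable_rpow_mul_exp_neg_mul_sq (b := 1/2) (by norm_num) (s := 2) (by norm_num)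
  have : ∀ x : ℝ, x ^ (2:ℝ) = x ^ 2 := fun x => by
    rw [show (2:ℝ) = ((2:ℕ):ℝ) by norm_num, Real.rpow_natCast]
  simpa [this] using h

lemma gauss2 : ∫ x : ℝ, x ^ 2 * exp (-(1/2) * x ^ 2) = Real.sqrt (2 * π) := by
  set F : ℝ → ℝ := fun x => -x * exp (-(1/2) * x ^ 2) with hF
  have hderiv : ∀ x : ℝ, HasDerivAt F (x ^ 2 * exp (-(1/2) * x ^ 2) - exp (-(1/2) * x ^ 2)) x := by
    intro x
    have h1 : HasDerivAt (fun x : ℝ => -x) (-1) x := (hasDerivAt_id x).neg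
    have h2 : HasDerivAt (fun x : ℝ => exp (-(1/2) * x ^ 2))
        (exp (-(1/2) * x ^ 2) * (-(1/2) * (2 * x))) x := by
      have := ((hasDerivAt_pow 2 x).const_mul (-(1/2 : ℝ))).exp
      simpa using this
    have : HasDerivAt (fun x => -x * exp (-(1/2) * x ^ 2)) _ x := h1.mul h2
    convert this using 1
    simp [hF]
    ring
  have htop : Tendsto F atTop (nhds 0) := by
    have h := rpow_mul_exp_neg_mul_sq_isLittleO_exp_neg (b := 1/2) (by norm_num) 1
    have h2 : Tendsto (fun x : ℝ => exp (-(1/2) * x)) atTop (nhds 0) := by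
      have hlin : Tendsto (fun x : ℝ => -(1/2) * x) atTop atBot := by
        have h0 : Tendsto (fun x : ℝ => (1/2 : ℝ) * x) atTop atTop :=
          Tendsto.const_mul_atTop (by norm_num) tendsto_id
        exact (tendsto_neg_atTop_atBot.comp h0).congr fun x => (neg_mul (1/2 : ℝ) x).symm
      exact tendsto_exp_atBot.comp hlin
    have h3 := h.trans_tendsto h2
    have h4 : Tendsto (fun x : ℝ => x * exp (-(1/2) * x ^ 2)) atTop (nhds 0) := by
      refine h3.congr' ?_
      filter_upwards [eventually_ge_atTop (0:ℝ)] with x hx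
      rw [Real.rpow_one]
    simpa [hF] using h4.neg
  have hbot : Tendsto F atBot (nhds 0) := by
    have : (F ∘ (fun x : ℝ => -x)) = fun x : ℝ => x * exp (-(1/2) * x ^ 2) := by
      funext x
      show -(-x) * exp (-(1/2) * (-x) ^ 2) = x * exp (-(1/2) * x ^ 2)
      rw [neg_neg, neg_sq]
    have h4 : Tendsto (F ∘ (fun x : ℝ => -x)) atTop (nhds 0) := by
      rw [this]
      have h := rpow_mul_exp_neg_mul_sq_isLittleO_exp_neg (b := 1/2) (by norm_num) 1
      have h2 : Tendsto (fun x : ℝ => exp (-(1/2) * x)) atTop (nhds 0) := by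
        have hlin : Tendsto (fun x : ℝ => -(1/2) * x) atTop atBot := by
          have h0 : Tendsto (fun x : ℝ => (1/2 : ℝ) * x) atTop atTop :=
            Tendsto.const_mul_atTop (by norm_num) tendsto_id
          exact (tendsto_neg_atTop_atBot.comp h0).congr fun x => (neg_mul (1/2 : ℝ) x).symm
        exact tendsto_exp_atBot.comp hlin
      refine (h.trans_tendsto h2).congr' ?_
      filter_upwards [eventually_ge_atTop (0:ℝ)] with x hx
      rw [Real.rpow_one]
    have h5 := h4.comp tendsto_neg_atBot_atTop
    have : ((F ∘ fun x : ℝ => -x) ∘ Neg.neg) = F := by funext x; simp [Function.comp]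
    rwa [this] at h5
  have key := MeasureTheory.integral_of_hasDerivAt_of_tendsto hderiv
    (gauss2_int.sub gauss1_int) hbot htop
  rw [integral_sub gauss2_int gauss1_int] at key
  rw [sub_zero] at key
  have := gauss1
  linarith

lemma gibbs_pointwise {a b : ℝ} (ha : 0 ≤ a) (hb : 0 < b) :
    a - b ≤ a * Real.log a - a * Real.log b := by
  rcases ha.eq_or_lt with h | h
  · simp [← h]; linarith
  · have h1 : Real.log (b / a) ≤ b / a - 1 := Real.log_le_sub_one_of_pos (div_pos hb h)
    rw [Real.log_div hb.ne' h.ne'] at h1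
    have h2 := mul_le_mul_of_nonneg_left h1 h.le
    have h3 : a * (b / a - 1) = b - a := by field_simp
    nlinarith

lemma cov_affine {N : ℕ} (Q : Matrix (Fin N) (Fin N) ℝ) (hQ : Q.det ≠ 0)
    (μ : Fin N → ℝ) (φ : (Fin N → ℝ) → ℝ) :
    (∫ x, φ x) = |Q.det| * ∫ y, φ (μ + Q.mulVec y) ∧
      (Integrable φ ↔ Integrable fun y => φ (μ + Q.mulVec y)) := by
  have hdet : LinearMap.det (Matrix.toLin' Q) ≠ 0 := by
    rwa [LinearMap.det_toLin']
  let e₁ : (Fin N → ℝ) ≃L[ℝ] (Fin N → ℝ) :=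
    (LinearMap.equivOfDetNeZero _ hdet).toContinuousLinearEquiv
  let e : (Fin N → ℝ) ≃ᵐ (Fin N → ℝ) := e₁.toHomeomorph.toMeasurableEquiv
  have he : ⇑e = ⇑(Matrix.toLin' Q) := rfl
  have hmap : Measure.map e volume = ENNReal.ofReal |Q.det⁻¹| • volume := by
    have h := Measure.map_linearMap_addHaar_eq_smul_addHaar (μ := volume) hdet
    rw [LinearMap.det_toLin'] at h
    rw [he]; exact h
  have habs : (0:ℝ) < |Q.det| := abs_pos.mpr hQ
  constructor
  · have h1 : ∫ y, φ (μ + Q.mulVec y) = ∫ x, φ (μ + x) ∂(Measure.map e volume) := by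
      rw [MeasureTheory.integral_map_equiv]
      rfl
    rw [h1, hmap, integral_smul_measure, ENNReal.toReal_ofReal (abs_nonneg _),
      integral_add_left_eq_self, abs_inv, smul_eq_mul]
    field_simp
  · have h2 : (Integrable fun y => φ (μ + Q.mulVec y)) ↔
        Integrable (fun x => φ (μ + x)) (Measure.map e volume) := by
      rw [MeasureTheory.integrable_map_equiv]
      rfl
    rw [h2, hmap, integrable_smul_measure
      (ne_of_gt (ENNReal.ofReal_pos.mpr (abs_pos.mpr (inv_ne_zero hQ)))) ENNReal.ofReal_ne_top]
    let t : (Fin N → ℝ) ≃ᵐ (Fin N → ℝ) := (Homeomorph.addLeft μ).toMeasurableEquiv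
    have ht : Measure.map t volume = volume := by
      have : ⇑t = fun x => μ + x := rfl
      rw [this]
      exact map_add_left_eq_self volume μ
    constructor
    · intro h
      have := (MeasureTheory.integrable_map_equiv t φ).mp (by rwa [ht])
      exact this
    · intro h
      have := (MeasureTheory.integrable_map_equiv t φ).mpr h
      rwa [ht] at this

end AuxMaxEnt

theorem multivariate_gaussian_maximizes_entropy {N : ℕ} (μ : Fin N → ℝ)
    (S : Matrix (Fin N) (Fin N) ℝ) (hS : S.PosDef)
    (f : (Fin N → ℝ) → ℝ) (hmeas : Measurable f) (hnonneg : ∀ x, 0 ≤ f x)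
    (hint : Integrable f) (hprob : ∫ x, f x = 1)
    (hmeanInt : ∀ i, Integrable fun x => x i * f x)
    (hmean : ∀ i, ∫ x, x i * f x = μ i)
    (hcovInt : ∀ i j, Integrable fun x => (x i - μ i) * (x j - μ j) * f x)
    (hcov : ∀ i j, ∫ x, (x i - μ i) * (x j - μ j) * f x = S i j)
    (hent : Integrable fun x => f x * Real.log (f x)) :
    (-∫ x, f x * Real.log (f x)) ≤
        (1 / 2) * Real.log ((2 * π * Real.exp 1) ^ N * S.det) ∧
      (-∫ x, gaussDensity μ S x * Real.log (gaussDensity μ S x)) =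
        (1 / 2) * Real.log ((2 * π * Real.exp 1) ^ N * S.det) := by
  have h2π : (0:ℝ) < 2 * π := by positivity
  have hdetS : 0 < S.det := hS.det_pos
  set q : (Fin N → ℝ) → ℝ := fun x => (x - μ) ⬝ᵥ S⁻¹.mulVec (x - μ) with hq
  set c0 : ℝ := (2 * π) ^ (-(N : ℝ) / 2) * S.det ^ (-(1 : ℝ) / 2) with hc0
  have hc0pos : 0 < c0 :=
    mul_pos (Real.rpow_pos_of_pos h2π _) (Real.rpow_pos_of_pos hdetS _)
  have hgdef : ∀ x, gaussDensity μ S x = c0 * Real.exp (-(1/2) * q x) := fun x => by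
    simp only [gaussDensity, hc0, hq]
  have hgpos : ∀ x, 0 < gaussDensity μ S x := fun x => by
    rw [hgdef]; positivity
  -- matrix facts
  open scoped MatrixOrder in
  set Q := CFC.sqrt S with hQdef
  open scoped MatrixOrder in
  have hQQ : Q * Q = S := CFC.sqrt_mul_sqrt_self S hS.posSemidef.nonneg
  have hQT : Qᵀ = Q := by
    rw [← Matrix.conjTranspose_eq_transpose_of_trivial]
    open scoped MatrixOrder in
    exact (CFC.sqrt_nonneg S).posSemidef.1
  have hST : Sᵀ = S := by
    rw [← Matrix.conjTranspose_eq_transpose_of_trivial]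
    exact hS.1
  have hdd : Q.det * Q.det = S.det := by rw [← Matrix.det_mul, hQQ]
  have hdne : Q.det ≠ 0 := by
    intro h; rw [h, mul_zero] at hdd; exact hdetS.ne hdd
  have hQU : IsUnit Q.det := hdne.isUnit
  have hQSQ : Q * (S⁻¹ * Q) = 1 := by
    rw [← hQQ, Matrix.mul_inv_rev, Matrix.mul_assoc Q⁻¹ Q⁻¹ Q,
      Matrix.nonsing_inv_mul Q hQU, mul_one, Matrix.mul_nonsing_inv Q hQU]
  have hquad : ∀ y, q (μ + Q.mulVec y) = ∑ i, y i * y i := by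
    intro y
    have h0 : (μ + Q.mulVec y) - μ = Q.mulVec y := by simp
    show ((μ + Q.mulVec y) - μ) ⬝ᵥ S⁻¹.mulVec ((μ + Q.mulVec y) - μ) = _
    rw [h0, Matrix.mulVec_mulVec]
    rw [show Q.mulVec y = Matrix.vecMul y Q from by conv_lhs => rw [← hQT, Matrix.mulVec_transpose]]
    rw [dotProduct_mulVec, Matrix.vecMul_vecMul, hQSQ, Matrix.vecMul_one]
    rfl
  -- Gaussian under affine change of variables
  have hgy : ∀ y, gaussDensity μ S (μ + Q.mulVec y)
      = c0 * ∏ i, Real.exp (-(1/2) * (y i) ^ 2) := by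
    intro y
    rw [hgdef, hquad]
    congr 1
    rw [← Real.exp_sum]
    congr 1
    rw [Finset.mul_sum]
    exact Finset.sum_congr rfl fun i _ => by ring
  -- normalization constant
  have hsqrtN : Real.sqrt (2*π) ^ N = (2*π) ^ ((N:ℝ)/2) := by
    rw [show Real.sqrt (2*π) = (2*π) ^ ((1:ℝ)/2) from Real.sqrt_eq_rpow _,
      ← Real.rpow_natCast ((2*π) ^ ((1:ℝ)/2)) N, ← Real.rpow_mul h2π.le,
      show (1:ℝ)/2 * (N:ℝ) = (N:ℝ)/2 from by ring]
  have hdetr : S.det ^ (-(1:ℝ)/2) = |Q.det|⁻¹ := by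
    have habs : |Q.det| * |Q.det| = S.det := by rw [abs_mul_abs_self]; exact hdd
    rw [← habs, show |Q.det| * |Q.det| = |Q.det| ^ (2:ℝ) from by
        rw [show (2:ℝ) = ((2:ℕ):ℝ) by norm_num, Real.rpow_natCast]; ring,
      ← Real.rpow_mul (abs_nonneg _), show (2:ℝ) * (-(1:ℝ)/2) = -1 from by norm_num,
      Real.rpow_neg_one]
  have hconst : |Q.det| * (c0 * Real.sqrt (2*π) ^ N) = 1 := by
    rw [hc0, hdetr, hsqrtN,
      show |Q.det| * ((2*π) ^ (-(N:ℝ)/2) * |Q.det|⁻¹ * (2*π) ^ ((N:ℝ)/2))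
        = (|Q.det| * |Q.det|⁻¹) * ((2*π) ^ (-(N:ℝ)/2) * (2*π) ^ ((N:ℝ)/2)) from by ring,
      mul_inv_cancel₀ (abs_ne_zero.mpr hdne), ← Real.rpow_add h2π,
      show -(N:ℝ)/2 + (N:ℝ)/2 = 0 from by ring, Real.rpow_zero, one_mul]
  -- integral of the Gaussian density
  have hprod_int : Integrable fun y : Fin N → ℝ => c0 * ∏ i, Real.exp (-(1/2) * (y i) ^ 2) :=
    (Integrable.fintype_prod (f := fun _ t => Real.exp (-(1/2) * t ^ 2))
      fun _ => gauss1_int).const_mul c0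
  have Ig : Integrable (gaussDensity μ S) := by
    refine (cov_affine Q hdne μ _).2.mpr ?_
    simp only [hgy]
    exact hprod_int
  have Eg1 : ∫ x, gaussDensity μ S x = 1 := by
    rw [(cov_affine Q hdne μ _).1]
    simp only [hgy]
    rw [integral_const_mul,
      integral_fintype_prod_volume_eq_pow (ι := Fin N) (fun t : ℝ => Real.exp (-(1/2) * t ^ 2)),
      gauss1, Fintype.card_fin]
    exact hconst
  -- second moment of the Gaussian
  set hh : Fin N → Fin N → ℝ → ℝ := fun i j t =>
    if j = i then t ^ 2 * Real.exp (-(1/2) * t ^ 2) else Real.exp (-(1/2) * t ^ 2) with hhdef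
  have hh_int : ∀ i j, Integrable (hh i j) := by
    intro i j
    by_cases hji : j = i
    · simpa only [hhdef, hji, if_pos rfl, ↓reduceIte] using gauss2_int
    · simpa only [hhdef, if_neg hji] using gauss1_int
  have hh_val : ∀ i j, ∫ t : ℝ, hh i j t = Real.sqrt (2*π) := by
    intro i j
    by_cases hji : j = i
    · simp only [hhdef, hji, if_pos rfl]; exact gauss2
    · simp only [hhdef, if_neg hji]; exact gauss1
  have hprod2 : ∀ i (y : Fin N → ℝ),
      (∏ j, Real.exp (-(1/2) * (y j) ^ 2)) * (y i * y i) = ∏ j, hh i j (y j) := by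
    intro i y
    rw [← Finset.mul_prod_erase Finset.univ (fun j => hh i j (y j)) (Finset.mem_univ i),
      ← Finset.mul_prod_erase Finset.univ (fun j => Real.exp (-(1/2) * (y j) ^ 2))
        (Finset.mem_univ i)]
    have herase : ∏ j ∈ Finset.univ.erase i, hh i j (y j)
        = ∏ j ∈ Finset.univ.erase i, Real.exp (-(1/2) * (y j) ^ 2) :=
      Finset.prod_congr rfl fun j hj => by
        simp only [hhdef, if_neg (Finset.ne_of_mem_erase hj)]
    have hii : hh i i (y i) = (y i) ^ 2 * Real.exp (-(1/2) * (y i) ^ 2) := by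
      simp [hhdef]
    rw [herase, hii]
    ring
  have hgyq : ∀ y, gaussDensity μ S (μ + Q.mulVec y) * q (μ + Q.mulVec y)
      = c0 * ∑ i, ∏ j, hh i j (y j) := by
    intro y
    rw [hgy, hquad, mul_assoc, Finset.mul_sum]
    congr 1
    exact Finset.sum_congr rfl fun i _ => hprod2 i y
  have hprod2_int : ∀ i, Integrable fun y : Fin N → ℝ => ∏ j, hh i j (y j) :=
    fun i => Integrable.fintype_prod fun j => hh_int i j
  have Igq : Integrable fun x => gaussDensity μ S x * q x := by
    refine (cov_affine Q hdne μ _).2.mpr ?_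
    simp only [hgyq]
    exact (integrable_finset_sum _ fun i _ => hprod2_int i).const_mul c0
  have Egq : ∫ x, gaussDensity μ S x * q x = (N:ℝ) := by
    rw [(cov_affine Q hdne μ _).1]
    simp only [hgyq]
    rw [integral_const_mul,
      integral_finset_sum _ fun i _ => hprod2_int i]
    have hval : ∀ i : Fin N, ∫ y : Fin N → ℝ, ∏ j, hh i j (y j) = Real.sqrt (2*π) ^ N := by
      intro i
      rw [integral_fintype_prod_volume_eq_prod (ι := Fin N) (fun j => hh i j)]
      rw [Finset.prod_congr rfl fun j (_ : j ∈ Finset.univ) => hh_val i j,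
        Finset.prod_const, Finset.card_univ, Fintype.card_fin]
    rw [Finset.sum_congr rfl fun i _ => hval i, Finset.sum_const, Finset.card_univ,
      Fintype.card_fin, nsmul_eq_mul,
      show |Q.det| * (c0 * ((N:ℝ) * Real.sqrt (2*π) ^ N))
        = (N:ℝ) * (|Q.det| * (c0 * Real.sqrt (2*π) ^ N)) from by ring,
      hconst, mul_one]
  -- log of the Gaussian density
  have hlogg : ∀ x, Real.log (gaussDensity μ S x) = Real.log c0 + (-(1/2) * q x) := fun x => by
    rw [hgdef, Real.log_mul hc0pos.ne' (Real.exp_ne_zero _), Real.log_exp]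
  -- f-side quadratic integral
  have hfq_eq : ∀ x, f x * q x
      = ∑ i, ∑ j, S⁻¹ i j * ((x i - μ i) * (x j - μ j) * f x) := by
    intro x
    show f x * ((x - μ) ⬝ᵥ S⁻¹.mulVec (x - μ)) = _
    simp only [dotProduct, Matrix.mulVec, Pi.sub_apply, Finset.mul_sum]
    exact Finset.sum_congr rfl fun i _ => Finset.sum_congr rfl fun j _ => by ring
  have hfq_int : Integrable fun x => f x * q x := by
    have h1 : Integrable fun x => ∑ i, ∑ j, S⁻¹ i j * ((x i - μ i) * (x j - μ j) * f x) :=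
      integrable_finset_sum _ fun i _ =>
        integrable_finset_sum _ fun j _ => (hcovInt i j).const_mul _
    exact h1.congr (Filter.EventuallyEq.of_eq (funext fun x => (hfq_eq x).symm))
  have htrace : ∑ i, ∑ j, S⁻¹ i j * S i j = (N:ℝ) := by
    have hSsymm : ∀ i j, S i j = S j i := fun i j => by
      conv_lhs => rw [← hST]
      exact Matrix.transpose_apply S i j
    have h1 : S⁻¹ * S = 1 := Matrix.nonsing_inv_mul S hdetS.ne'.isUnit
    calc ∑ i, ∑ j, S⁻¹ i j * S i j = ∑ i, ∑ j, S⁻¹ i j * S j i :=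
          Finset.sum_congr rfl fun i _ => Finset.sum_congr rfl fun j _ => by rw [hSsymm i j]
      _ = ∑ i, (S⁻¹ * S) i i := by simp [Matrix.mul_apply]
      _ = (N:ℝ) := by
          rw [h1]
          simp [Matrix.one_apply, Finset.sum_const, Finset.card_univ]
  have hfq_val : ∫ x, f x * q x = (N:ℝ) := by
    simp only [hfq_eq]
    rw [integral_finset_sum (ι := Fin N) _ fun i _ =>
      integrable_finset_sum _ fun j _ => (hcovInt i j).const_mul (S⁻¹ i j)]
    have hval : ∀ i : Fin N, ∫ x, ∑ j, S⁻¹ i j * ((x i - μ i) * (x j - μ j) * f x)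
        = ∑ j, S⁻¹ i j * S i j := by
      intro i
      rw [integral_finset_sum _ fun j _ => (hcovInt i j).const_mul (S⁻¹ i j)]
      exact Finset.sum_congr rfl fun j _ => by rw [integral_const_mul, hcov i j]
    rw [Finset.sum_congr rfl fun i _ => hval i, htrace]
  -- entropy integrals
  have hflogg_int : Integrable fun x => f x * Real.log (gaussDensity μ S x) := by
    have h1 : Integrable fun x => Real.log c0 * f x + (-(1/2)) * (f x * q x) :=
      (hint.const_mul _).add (hfq_int.const_mul _)
    exact h1.congr (Filter.EventuallyEq.of_eq (funext fun x => by rw [hlogg x]; ring))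
  have hflogg_val : ∫ x, f x * Real.log (gaussDensity μ S x) = Real.log c0 - (N:ℝ)/2 := by
    have heq : (fun x => f x * Real.log (gaussDensity μ S x))
        = fun x => Real.log c0 * f x + (-(1/2)) * (f x * q x) :=
      funext fun x => by rw [hlogg x]; ring
    rw [heq, integral_add (hint.const_mul _) (hfq_int.const_mul _), integral_const_mul,
      integral_const_mul, hprob, hfq_val]
    ring
  have hglogg_int : Integrable fun x => gaussDensity μ S x * Real.log (gaussDensity μ S x) := by
    have h1 : Integrable fun x => Real.log c0 * gaussDensity μ S x
        + (-(1/2)) * (gaussDensity μ S x * q x) :=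
      (Ig.const_mul _).add (Igq.const_mul _)
    exact h1.congr (Filter.EventuallyEq.of_eq (funext fun x => by rw [hlogg x]; ring))
  have hglogg_val : ∫ x, gaussDensity μ S x * Real.log (gaussDensity μ S x)
      = Real.log c0 - (N:ℝ)/2 := by
    have heq : (fun x => gaussDensity μ S x * Real.log (gaussDensity μ S x))
        = fun x => Real.log c0 * gaussDensity μ S x + (-(1/2)) * (gaussDensity μ S x * q x) :=
      funext fun x => by rw [hlogg x]; ring
    rw [heq, integral_add (Ig.const_mul _) (Igq.const_mul _), integral_const_mul,
      integral_const_mul, Eg1, Egq]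
    ring
  -- Gibbs inequality
  have hGibbs : ∫ x, f x * Real.log (gaussDensity μ S x) ≤ ∫ x, f x * Real.log (f x) := by
    have hpt : ∀ x, 0 ≤ (f x * Real.log (f x) - f x * Real.log (gaussDensity μ S x))
        - (f x - gaussDensity μ S x) := fun x => by
      have := gibbs_pointwise (hnonneg x) (hgpos x)
      linarith
    have h0 : 0 ≤ ∫ x, ((f x * Real.log (f x) - f x * Real.log (gaussDensity μ S x))
        - (f x - gaussDensity μ S x)) := integral_nonneg hpt
    rw [integral_sub
        (f := fun x => f x * Real.log (f x) - f x * Real.log (gaussDensity μ S x))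
        (g := fun x => f x - gaussDensity μ S x) (hent.sub hflogg_int) (hint.sub Ig),
      integral_sub (f := fun x => f x * Real.log (f x))
        (g := fun x => f x * Real.log (gaussDensity μ S x)) hent hflogg_int,
      integral_sub (f := fun x => f x) (g := fun x => gaussDensity μ S x) hint Ig,
      hprob, Eg1] at h0
    linarith
  -- the value of the right-hand side
  have hRHS : (1/2) * Real.log ((2*π*Real.exp 1)^N * S.det) = -(Real.log c0 - (N:ℝ)/2) := by
    have hlogc0 : Real.log c0
        = (-(N:ℝ)/2) * Real.log (2*π) + (-(1:ℝ)/2) * Real.log S.det := by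
      rw [hc0, Real.log_mul (Real.rpow_pos_of_pos h2π _).ne' (Real.rpow_pos_of_pos hdetS _).ne',
        Real.log_rpow h2π, Real.log_rpow hdetS]
    have h2πe : (2*π*Real.exp 1) ≠ 0 := by positivity
    rw [Real.log_mul (pow_ne_zero _ h2πe) hdetS.ne', Real.log_pow,
      Real.log_mul (ne_of_gt h2π) (Real.exp_ne_zero 1), Real.log_exp, hlogc0]
    ring
  refine ⟨?_, ?_⟩
  · rw [hRHS]
    rw [hflogg_val] at hGibbs
    linarith
  · rw [hRHS, hglogg_val]
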